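/- For all integers n ≥ 2 and k ≥ 1, the graph K_1 ⊔ K_{kn−1} (the disjoint union of an isolated vertex and a complete graph on kn − 1 vertices) contains no k pairwise vertex-disjoint copies of the path P_n, and its complement contains no Jahangir graph J_4 as a subgraph. Consequently R(kP_n, J_4) ≥ kn + 1. -/

import Mathlib

open SimpleGraph

/-- `G` is contained in `F` as a (not necessarily induced) subgraph, i.e. there is an
injective graph homomorphism from `G` into `F`. -/
def Contains {α : Type*} {β : Type*} (G : SimpleGraph α) (F : SimpleGraph β) : Prop :=
  ∃ f : α → β, Function.Injective f ∧ ∀ ⦃a b : α⦄, G.Adj a b → F.Adj (f a) (f b)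

/-- The Jahangir graph `J_{2m}` on `2m+1` vertices: a cycle on the vertices
`0, 1, …, 2m-1` together with one additional hub vertex (index `2m`) adjacent to the
alternate cycle vertices `0, 2, …, 2m-2`. -/
def jahangir (m : ℕ) : SimpleGraph (Fin (2 * m + 1)) :=
  SimpleGraph.fromRel (fun a b =>
    (a.val < 2 * m ∧ b.val < 2 * m ∧ b.val = (a.val + 1) % (2 * m)) ∨
    (a.val = 2 * m ∧ b.val < 2 * m ∧ b.val % 2 = 0))

/-- The disjoint union of `k` copies of the graph `G`. -/
def kCopies {α : Type*} (k : ℕ) (G : SimpleGraph α) : SimpleGraph (Fin k × α) where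
  Adj a b := a.1 = b.1 ∧ G.Adj a.2 b.2
  symm := ⟨fun _ _ h => ⟨h.1.symm, h.2.symm⟩⟩
  loopless := ⟨fun a h => G.loopless.irrefl a.2 h.2⟩

/-- The disjoint union `K_a ⊔ K_b` of two complete graphs. -/
def twoCliques (a b : ℕ) : SimpleGraph (Fin a ⊕ Fin b) :=
  SimpleGraph.fromRel (fun x y => x.isLeft = y.isLeft)

/-- `ramseyProp G H N` says that every simple graph `F` on `N` vertices contains `G`
as a subgraph, or its complement contains `H` as a subgraph.  The Ramsey number
`R(G, H)` is the least `N` with this property. -/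
def ramseyProp {α : Type*} {β : Type*} (G : SimpleGraph α) (H : SimpleGraph β) (N : ℕ) : Prop :=
  ∀ F : SimpleGraph (Fin N), Contains G F ∨ Contains H Fᶜ

-- aux lemmas

lemma left_of_isLeft {m : ℕ} (y : Fin 1 ⊕ Fin m) (h : y.isLeft = true) :
    y = Sum.inl 0 := by
  cases y with
  | inl x => simp [Fin.eq_zero x]
  | inr x => simp at h

lemma twoCliques_adj {a b : ℕ} {x y : Fin a ⊕ Fin b} :
    (twoCliques a b).Adj x y ↔ x ≠ y ∧ x.isLeft = y.isLeft := by
  rw [twoCliques, SimpleGraph.fromRel_adj]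
  constructor
  · rintro ⟨h1, h2 | h2⟩
    exacts [⟨h1, h2⟩, ⟨h1, h2.symm⟩]
  · rintro ⟨h1, h2⟩; exact ⟨h1, Or.inl h2⟩

lemma twoCliques_compl_adj {a b : ℕ} {x y : Fin a ⊕ Fin b} :
    (twoCliques a b)ᶜ.Adj x y ↔ x ≠ y ∧ x.isLeft ≠ y.isLeft := by
  simp [SimpleGraph.compl_adj, twoCliques_adj]
  tauto

lemma path_neighbor {n : ℕ} (hn : 2 ≤ n) (j : Fin n) :
    ∃ j', (pathGraph n).Adj j j' := by
  by_cases h : j.val + 1 < n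
  · exact ⟨⟨j.val + 1, h⟩, pathGraph_adj.mpr (Or.inl rfl)⟩
  · have hj : j.val = n - 1 := by omega
    have h1 : 1 ≤ j.val := by omega
    refine ⟨⟨j.val - 1, by omega⟩, pathGraph_adj.mpr (Or.inr ?_)⟩
    simp; omega

lemma no_kPath (n k : ℕ) (hn : 2 ≤ n) (hk : 1 ≤ k) :
    ¬ Contains (kCopies k (pathGraph n)) (twoCliques 1 (k * n - 1)) := by
  rintro ⟨f, hinj, hadj⟩
  have hcard : Fintype.card (Fin k × Fin n) = Fintype.card (Fin 1 ⊕ Fin (k * n - 1)) := by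
    simp
    have : 1 ≤ k * n := le_trans hk (Nat.le_mul_of_pos_right k (by omega))
    omega
  have hsurj : Function.Surjective f :=
    ((Fintype.bijective_iff_injective_and_card f).mpr ⟨hinj, hcard⟩).2
  obtain ⟨⟨i, j⟩, hfa⟩ := hsurj (Sum.inl 0)
  obtain ⟨j', hjj'⟩ := path_neighbor hn j
  have hadj2 : (twoCliques 1 (k * n - 1)).Adj (f (i, j)) (f (i, j')) :=
    hadj ⟨rfl, hjj'⟩
  rw [hfa, twoCliques_adj] at hadj2
  exact hadj2.1 (left_of_isLeft _ hadj2.2.symm).symm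

lemma jahangir_adj01 : (jahangir 2).Adj 0 1 := by
  rw [jahangir, SimpleGraph.fromRel_adj]; exact ⟨by decide, Or.inl (Or.inl (by decide))⟩
lemma jahangir_adj12 : (jahangir 2).Adj 1 2 := by
  rw [jahangir, SimpleGraph.fromRel_adj]; exact ⟨by decide, Or.inl (Or.inl (by decide))⟩
lemma jahangir_adj23 : (jahangir 2).Adj 2 3 := by
  rw [jahangir, SimpleGraph.fromRel_adj]; exact ⟨by decide, Or.inl (Or.inl (by decide))⟩

lemma no_J4 (m : ℕ) : ¬ Contains (jahangir 2) (twoCliques 1 m)ᶜ := by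
  rintro ⟨f, hinj, hadj⟩
  have h01 := twoCliques_compl_adj.mp (hadj jahangir_adj01)
  have h12 := twoCliques_compl_adj.mp (hadj jahangir_adj12)
  have h23 := twoCliques_compl_adj.mp (hadj jahangir_adj23)
  have key : ∀ b0 b1 b2 b3 : Bool, b0 ≠ b1 → b1 ≠ b2 → b2 ≠ b3 →
      (b0 = true ∧ b2 = true) ∨ (b1 = true ∧ b3 = true) := by
    intro b0 b1 b2 b3
    cases b0 <;> cases b1 <;> cases b2 <;> cases b3 <;> simp
  rcases key _ _ _ _ h01.2 h12.2 h23.2 with ⟨ha, hb⟩ | ⟨ha, hb⟩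
  · have : f 0 = f 2 := (left_of_isLeft _ ha).trans (left_of_isLeft _ hb).symm
    exact absurd (hinj this) (by decide)
  · have : f 1 = f 3 := (left_of_isLeft _ ha).trans (left_of_isLeft _ hb).symm
    exact absurd (hinj this) (by decide)


/-- For `n ≥ 2` and `k ≥ 1`, the graph `K_1 ⊔ K_{kn-1}` contains no `k` disjoint
copies of `P_n`, its complement contains no `J_4`, and consequently
`R(kP_n, J_4) ≥ kn + 1`. -/
theorem ramsey_kPath_J4_lower (n k : ℕ) (hn : 2 ≤ n) (hk : 1 ≤ k) :
    ¬ Contains (kCopies k (pathGraph n)) (twoCliques 1 (k * n - 1)) ∧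
    ¬ Contains (jahangir 2) (twoCliques 1 (k * n - 1))ᶜ ∧
    ∀ N : ℕ, ramseyProp (kCopies k (pathGraph n)) (jahangir 2) N → k * n + 1 ≤ N := by
  refine ⟨no_kPath n k hn hk, no_J4 _, ?_⟩
  intro N hN
  by_contra hlt
  push_neg at hlt
  have hNle : N ≤ k * n := by omega
  have hkn : 1 ≤ k * n := le_trans hk (Nat.le_mul_of_pos_right k (by omega))
  have heq : k * n = 1 + (k * n - 1) := by omega
  let g : Fin N → Fin 1 ⊕ Fin (k * n - 1) :=
    fun x => finSumFinEquiv.symm (Fin.cast heq (Fin.castLE hNle x))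
  have hginj : Function.Injective g := by
    intro x y hxy
    have := finSumFinEquiv.symm.injective hxy
    have := Fin.cast_injective heq this
    exact Fin.castLE_injective hNle this
  rcases hN ((twoCliques 1 (k * n - 1)).comap g) with ⟨f, hinj, hadj⟩ | ⟨f, hinj, hadj⟩
  · exact no_kPath n k hn hk ⟨g ∘ f, hginj.comp hinj, fun a b h => hadj h⟩
  · refine no_J4 (k * n - 1) ⟨g ∘ f, hginj.comp hinj, fun a b h => ?_⟩
    have := hadj h
    rw [SimpleGraph.compl_adj] at this ⊢
    exact ⟨fun he => this.1 (hginj he), this.2⟩
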